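/- Let X be a reflexive Banach space, q ∈ (1,∞), 𝓓 an inclusion-closed collection of families of nonempty bounded subsets of the spaces L^q(Ω,𝓕_τ;X), and Φ a mean random dynamical system on L^q(Ω,𝓕;X) over (Ω,𝓕,{𝓕_t}_{t∈ℝ},ℙ). If Φ has a weakly compact 𝓓-pullback absorbing set 𝓚 = {K(τ) : τ ∈ ℝ} ∈ 𝓓, then Φ has a unique weak 𝓓-pullback mean random attractor 𝓐 = {𝓐(τ) : τ ∈ ℝ} ∈ 𝓓, and it is given for each τ ∈ ℝ by 𝓐(τ) = ⋂_{r ≥ 0} cl_w(⋃_{t ≥ r} φ(t, τ−t)(K(τ−t))), where cl_w denotes closure in the weak topology of L^q(Ω,𝓕_τ;X). -/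
import Mathlib


/-!
Weak pullback mean random attractors for mean random dynamical systems
(Proposition 2.5 / main abstract result of the paper).

We work with a complete filtered probability space `(Ω, 𝓕, {𝓕 τ}_{τ ∈ ℝ}, μ)`,
a reflexive Banach space `X` and `q ∈ (1, ∞)`.  The Bochner space
`L^q(Ω, 𝓕_τ; X)` is realized as the subset `measSet μ 𝓕 q τ` of the ambient
space `Lp X q μ` consisting of the (a.e.) `𝓕 τ`-strongly measurable elements;
its weak topology is the topology induced from the weak topology of
`Lp X q μ` (these coincide on a closed subspace by Hahn–Banach).
-/

open MeasureTheory Set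
open scoped ENNReal NNReal

noncomputable section

namespace WeakMeanAttractor

variable {Ω X : Type*}

/-- The realization of `L^q(Ω, 𝓕_τ; X)` inside `Lp X q μ`: the set of elements that are
`μ`-a.e. equal to an `𝓕 τ`-strongly measurable function. -/
def measSet {m0 : MeasurableSpace Ω} [NormedAddCommGroup X] [NormedSpace ℝ X]
    (μ : Measure Ω) (𝓕 : Filtration ℝ m0) (q : ℝ≥0∞) (τ : ℝ) : Set (Lp X q μ) :=
  (lpMeas X ℝ (𝓕 τ) q μ : Set (Lp X q μ))

/-- A subset of `Lp X q μ` viewed inside the same space equipped with its weak topology. -/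
def wk {m0 : MeasurableSpace Ω} [NormedAddCommGroup X] [NormedSpace ℝ X]
    (μ : Measure Ω) (q : ℝ≥0∞) [Fact (1 ≤ q)] (S : Set (Lp X q μ)) :
    Set (WeakSpace ℝ (Lp X q μ)) :=
  toWeakSpace ℝ (Lp X q μ) '' S

/-- A set `S ⊆ Lp X q μ` is weakly compact if it is compact in the weak topology. -/
def WeaklyCompact {m0 : MeasurableSpace Ω} [NormedAddCommGroup X] [NormedSpace ℝ X]
    (μ : Measure Ω) (q : ℝ≥0∞) [Fact (1 ≤ q)] (S : Set (Lp X q μ)) : Prop :=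
  IsCompact (wk μ q S)

/-- `D = {D(τ) : τ ∈ ℝ}` is a family of nonempty bounded subsets of the spaces
`L^q(Ω, 𝓕_τ; X)`. -/
structure IsFamily {m0 : MeasurableSpace Ω} [NormedAddCommGroup X] [NormedSpace ℝ X]
    (μ : Measure Ω) (𝓕 : Filtration ℝ m0) (q : ℝ≥0∞) [Fact (1 ≤ q)]
    (D : ℝ → Set (Lp X q μ)) : Prop where
  nonempty : ∀ τ : ℝ, (D τ).Nonempty
  bounded : ∀ τ : ℝ, Bornology.IsBounded (D τ)
  adapted : ∀ τ : ℝ, D τ ⊆ measSet μ 𝓕 q τ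

/-- The collection `𝓓` is inclusion-closed: it contains every family of nonempty subsets of a
member of `𝓓`. -/
def InclusionClosed {m0 : MeasurableSpace Ω} [NormedAddCommGroup X] [NormedSpace ℝ X]
    {μ : Measure Ω} {q : ℝ≥0∞} (𝓓 : Set (ℝ → Set (Lp X q μ))) : Prop :=
  ∀ D ∈ 𝓓, ∀ D' : ℝ → Set (Lp X q μ), (∀ τ : ℝ, (D' τ).Nonempty ∧ D' τ ⊆ D τ) → D' ∈ 𝓓

/-- `φ` is a mean random dynamical system on `L^q(Ω, 𝓕; X)` over
`(Ω, 𝓕, {𝓕 τ}_{τ ∈ ℝ}, μ)`:  `φ t τ` maps `L^q(Ω, 𝓕_τ; X)` into `L^q(Ω, 𝓕_{t+τ}; X)`,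
`φ 0 τ` is the identity, and the cocycle property holds. -/
structure IsMRDS {m0 : MeasurableSpace Ω} [NormedAddCommGroup X] [NormedSpace ℝ X]
    (μ : Measure Ω) (𝓕 : Filtration ℝ m0) (q : ℝ≥0∞)
    (φ : ℝ → ℝ → Lp X q μ → Lp X q μ) : Prop where
  maps : ∀ t : ℝ, 0 ≤ t → ∀ τ : ℝ, ∀ u ∈ measSet μ 𝓕 q τ, φ t τ u ∈ measSet μ 𝓕 q (t + τ)
  id_eval : ∀ τ : ℝ, ∀ u ∈ measSet μ 𝓕 q τ, φ 0 τ u = u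
  cocycle : ∀ t : ℝ, 0 ≤ t → ∀ s : ℝ, 0 ≤ s → ∀ τ : ℝ, ∀ u ∈ measSet μ 𝓕 q τ,
    φ (t + s) τ u = φ t (τ + s) (φ s τ u)

/-- `K` is a `𝓓`-pullback absorbing set for `φ`:  for every `τ` and every `D ∈ 𝓓` there is
`T > 0` with `φ t (τ - t) '' D (τ - t) ⊆ K τ` for all `t ≥ T`. -/
def IsAbsorbing {m0 : MeasurableSpace Ω} [NormedAddCommGroup X] [NormedSpace ℝ X]
    {μ : Measure Ω} {q : ℝ≥0∞} (𝓓 : Set (ℝ → Set (Lp X q μ)))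
    (φ : ℝ → ℝ → Lp X q μ → Lp X q μ) (K : ℝ → Set (Lp X q μ)) : Prop :=
  ∀ τ : ℝ, ∀ D ∈ 𝓓, ∃ T > 0, ∀ t ≥ T, φ t (τ - t) '' D (τ - t) ⊆ K τ

/-- `K` is `𝓓`-pullback weakly attracting for `φ`: for every `τ`, every `D ∈ 𝓓` and every weak
neighborhood `N` of `K τ`, the pullback images `φ t (τ - t) '' D (τ - t)` eventually lie in `N`. -/
def IsWeaklyAttracting {m0 : MeasurableSpace Ω} [NormedAddCommGroup X] [NormedSpace ℝ X]
    {μ : Measure Ω} {q : ℝ≥0∞} [Fact (1 ≤ q)] (𝓓 : Set (ℝ → Set (Lp X q μ)))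
    (φ : ℝ → ℝ → Lp X q μ → Lp X q μ) (K : ℝ → Set (Lp X q μ)) : Prop :=
  ∀ τ : ℝ, ∀ D ∈ 𝓓, ∀ N : Set (WeakSpace ℝ (Lp X q μ)), N ∈ nhdsSet (wk μ q (K τ)) →
    ∃ T > 0, ∀ t ≥ T, wk μ q (φ t (τ - t) '' D (τ - t)) ⊆ N

/-- `A` is a weak `𝓓`-pullback mean random attractor for `φ`: it belongs to `𝓓`, each section
is weakly compact, it is `𝓓`-pullback weakly attracting, and it is minimal with these
properties. -/
structure IsWeakMeanAttractor {m0 : MeasurableSpace Ω} [NormedAddCommGroup X] [NormedSpace ℝ X]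
    {μ : Measure Ω} {q : ℝ≥0∞} [Fact (1 ≤ q)] (𝓓 : Set (ℝ → Set (Lp X q μ)))
    (φ : ℝ → ℝ → Lp X q μ → Lp X q μ) (A : ℝ → Set (Lp X q μ)) : Prop where
  mem : A ∈ 𝓓
  compact : ∀ τ : ℝ, WeaklyCompact μ q (A τ)
  attracts : IsWeaklyAttracting 𝓓 φ A
  minimal : ∀ C ∈ 𝓓, (∀ τ : ℝ, WeaklyCompact μ q (C τ)) → IsWeaklyAttracting 𝓓 φ C →
    ∀ τ : ℝ, A τ ⊆ C τ

/-- The pullback ω-limit set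
`𝓐(τ) = ⋂_{r ≥ 0} cl_w ( ⋃_{t ≥ r} φ(t, τ - t) (K (τ - t)) )`, where the closure is taken in
the weak topology of `L^q(Ω, 𝓕_τ; X)`. -/
def omegaLimit {m0 : MeasurableSpace Ω} [NormedAddCommGroup X] [NormedSpace ℝ X]
    (μ : Measure Ω) (q : ℝ≥0∞) [Fact (1 ≤ q)]
    (φ : ℝ → ℝ → Lp X q μ → Lp X q μ) (K : ℝ → Set (Lp X q μ)) (τ : ℝ) :
    Set (Lp X q μ) :=
  ⋂ r ∈ Ici (0 : ℝ),
    (⇑(toWeakSpace ℝ (Lp X q μ)) ⁻¹'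
      closure (wk μ q (⋃ t ∈ Ici r, φ t (τ - t) '' K (τ - t))))

/-- The weak topology on a real normed space is Hausdorff, since the dual separates points
(Hahn–Banach). -/
instance instT2WeakSpace {E : Type*} [NormedAddCommGroup E] [NormedSpace ℝ E] :
    T2Space (WeakSpace ℝ E) := by
  refine (WeakBilin.isEmbedding (B := (topDualPairing ℝ E).flip) ?_).t2Space
  intro x y h
  exact (NormedSpace.eq_iff_forall_dual_eq ℝ).mpr fun g => LinearMap.congr_fun h g

/-- **Existence and uniqueness of weak `𝓓`-pullback mean random attractors.**
Let `X` be a reflexive Banach space, `q ∈ (1, ∞)`, `𝓓` an inclusion-closed collection of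
families of nonempty bounded subsets of the spaces `L^q(Ω, 𝓕_τ; X)`, and `φ` a mean random
dynamical system.  If `φ` has a weakly compact `𝓓`-pullback absorbing set `K ∈ 𝓓`, then `φ`
has a unique weak `𝓓`-pullback mean random attractor `A ∈ 𝓓`, and it is given for each `τ` by
`A τ = ⋂_{r ≥ 0} cl_w (⋃_{t ≥ r} φ t (τ - t) '' K (τ - t))`. -/
theorem exists_unique_weakMeanAttractor
    {Ω X : Type*} {m0 : MeasurableSpace Ω}
    [NormedAddCommGroup X] [NormedSpace ℝ X] [CompleteSpace X]
    (hXrefl : Function.Surjective (NormedSpace.inclusionInDoubleDual ℝ X))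
    (μ : Measure Ω) [IsProbabilityMeasure μ]
    (𝓕 : Filtration ℝ m0)
    (h𝓕right : ∀ τ : ℝ, 𝓕 τ = ⨅ (s : ℝ) (_ : τ < s), 𝓕 s)
    (h𝓕null : ∀ (τ : ℝ) (N : Set Ω), μ N = 0 → MeasurableSet[𝓕 τ] N)
    (q : ℝ≥0∞) [Fact (1 ≤ q)] (hq1 : 1 < q) (hq2 : q ≠ ⊤)
    (𝓓 : Set (ℝ → Set (Lp X q μ)))
    (h𝓓 : ∀ D ∈ 𝓓, IsFamily μ 𝓕 q D)
    (h𝓓ic : InclusionClosed 𝓓)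
    (φ : ℝ → ℝ → Lp X q μ → Lp X q μ)
    (hφ : IsMRDS μ 𝓕 q φ)
    (K : ℝ → Set (Lp X q μ)) (hK𝓓 : K ∈ 𝓓)
    (hKcpt : ∀ τ : ℝ, WeaklyCompact μ q (K τ))
    (hKabs : IsAbsorbing 𝓓 φ K) :
    (∃! A : ℝ → Set (Lp X q μ), IsWeakMeanAttractor 𝓓 φ A) ∧
      IsWeakMeanAttractor 𝓓 φ (fun τ => omegaLimit μ q φ K τ) := by
  classical
  have htw_inj : Function.Injective (⇑(toWeakSpace ℝ (Lp X q μ))) :=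
    (toWeakSpace ℝ (Lp X q μ)).injective
  have htw_bij : Function.Bijective (⇑(toWeakSpace ℝ (Lp X q μ))) :=
    (toWeakSpace ℝ (Lp X q μ)).bijective
  set tw : Lp X q μ → WeakSpace ℝ (Lp X q μ) := ⇑(toWeakSpace ℝ (Lp X q μ)) with htw
  set U : ℝ → ℝ → Set (Lp X q μ) :=
    fun τ r => ⋃ t ∈ Ici r, φ t (τ - t) '' K (τ - t) with hUdef
  set C : ℝ → ℝ → Set (WeakSpace ℝ (Lp X q μ)) :=
    fun τ r => closure (tw '' U τ r) with hCdef
  have hwk : ∀ S : Set (Lp X q μ), wk μ q S = tw '' S := fun _ => rfl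
  have hA_def : ∀ τ, omegaLimit μ q φ K τ = ⋂ r ∈ Ici (0:ℝ), tw ⁻¹' C τ r := fun τ => rfl
  choose T hTpos hTabs using fun τ => hKabs τ K hK𝓓
  have hUanti : ∀ (τ : ℝ) {r r' : ℝ}, r ≤ r' → U τ r' ⊆ U τ r := fun τ {r r'} h =>
    biUnion_subset_biUnion_left (Ici_subset_Ici.mpr h)
  have hCanti : ∀ (τ : ℝ) {r r' : ℝ}, r ≤ r' → C τ r' ⊆ C τ r := fun τ {r r'} h =>
    closure_mono (image_mono (hUanti τ h))
  have hUK : ∀ τ r, T τ ≤ r → U τ r ⊆ K τ := fun τ r hr =>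
    iUnion₂_subset fun t ht => hTabs τ t (hr.trans ht)
  have hCsub : ∀ τ r, T τ ≤ r → C τ r ⊆ wk μ q (K τ) := fun τ r hr =>
    closure_minimal (image_mono (hUK τ r hr)) (hKcpt τ).isClosed
  have hCcpt : ∀ τ r, T τ ≤ r → IsCompact (C τ r) := fun τ r hr =>
    (hKcpt τ).of_isClosed_subset isClosed_closure (hCsub τ r hr)
  have hCne : ∀ τ r, (C τ r).Nonempty := by
    intro τ r
    obtain ⟨x, hx⟩ := (h𝓓 K hK𝓓).nonempty (τ - r)
    exact ⟨tw (φ r (τ - r) x),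
      subset_closure ⟨φ r (τ - r) x, mem_biUnion self_mem_Ici ⟨x, hx, rfl⟩, rfl⟩⟩
  have hIcc : ∀ τ, ⋂ r ∈ Ici (0:ℝ), C τ r = ⋂ r : ℝ, C τ (max r (T τ)) := by
    intro τ
    apply Subset.antisymm
    · exact subset_iInter fun r => biInter_subset_of_mem
        (mem_Ici.mpr ((hTpos τ).le.trans (le_max_right _ _)))
    · intro x hx
      exact mem_iInter₂.mpr fun r _ =>
        hCanti τ (le_max_left r (T τ)) (mem_iInter.mp hx r)
  have hwkA : ∀ τ, wk μ q (omegaLimit μ q φ K τ) = ⋂ r ∈ Ici (0:ℝ), C τ r := by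
    intro τ
    rw [hwk, hA_def τ, image_iInter₂ htw_bij]
    exact iInter₂_congr fun r _ => image_preimage_eq _ htw_bij.surjective
  have key : ∀ (τ r : ℝ), T τ ≤ r → ∀ D ∈ 𝓓, ∃ T' > 0, ∀ t ≥ T',
      φ t (τ - t) '' D (τ - t) ⊆ U τ r := by
    intro τ r hr D hD
    obtain ⟨T', hT'pos, hT'⟩ := hKabs (τ - r) D hD
    have hrx : 0 < r := (hTpos τ).trans_le hr
    refine ⟨r + T', by linarith, ?_⟩
    intro t ht
    rintro _ ⟨x, hx, rfl⟩
    have hu : T' ≤ t - r := by linarith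
    have hts : τ - t = (τ - r) - (t - r) := by ring
    have hxK : φ (t - r) (τ - t) x ∈ K (τ - r) := by
      rw [hts]
      exact hT' (t - r) hu ⟨x, by rw [← hts]; exact hx, rfl⟩
    have hxm : x ∈ measSet μ 𝓕 q (τ - t) := (h𝓓 D hD).adapted _ hx
    have hco : φ t (τ - t) x = φ r (τ - r) (φ (t - r) (τ - t) x) := by
      have h1 := hφ.cocycle r hrx.le (t - r) (hT'pos.le.trans hu) (τ - t) x hxm
      rw [show r + (t - r) = t by ring, show (τ - t) + (t - r) = τ - r by ring] at h1
      exact h1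
    rw [hco]
    exact mem_biUnion self_mem_Ici ⟨φ (t - r) (τ - t) x, hxK, rfl⟩
  have hAsub : ∀ τ, omegaLimit μ q φ K τ ⊆ K τ := by
    intro τ x hx
    rw [hA_def τ] at hx
    have h1 : tw x ∈ C τ (T τ) := mem_iInter₂.mp hx (T τ) (mem_Ici.mpr (hTpos τ).le)
    have h2 := hCsub τ (T τ) le_rfl h1
    rw [hwk] at h2
    obtain ⟨y, hy, he⟩ := h2
    rwa [← htw_inj he]
  have hAne : ∀ τ, (omegaLimit μ q φ K τ).Nonempty := by
    intro τ
    have hne : (⋂ r : ℝ, C τ (max r (T τ))).Nonempty := by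
      apply IsCompact.nonempty_iInter_of_directed_nonempty_isCompact_isClosed
      · intro r s
        exact ⟨max r s, hCanti τ (max_le_max (le_max_left r s) le_rfl),
          hCanti τ (max_le_max (le_max_right r s) le_rfl)⟩
      · exact fun r => hCne τ _
      · exact fun r => hCcpt τ _ (le_max_right _ _)
      · exact fun r => isClosed_closure
    obtain ⟨y, hy⟩ := hne
    obtain ⟨x, rfl⟩ := htw_bij.surjective y
    refine ⟨x, ?_⟩
    rw [hA_def τ]
    exact mem_iInter₂.mpr fun r _ =>
      hCanti τ (le_max_left r (T τ)) (mem_iInter.mp hy r)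
  have hAcpt : ∀ τ, WeaklyCompact μ q (omegaLimit μ q φ K τ) := by
    intro τ
    show IsCompact (wk μ q _)
    rw [hwkA τ]
    refine (hKcpt τ).of_isClosed_subset (isClosed_biInter fun r _ => isClosed_closure) ?_
    exact (biInter_subset_of_mem (mem_Ici.mpr (hTpos τ).le)).trans (hCsub τ (T τ) le_rfl)
  have hAmem : (fun τ => omegaLimit μ q φ K τ) ∈ 𝓓 :=
    h𝓓ic K hK𝓓 _ fun τ => ⟨hAne τ, hAsub τ⟩
  have hAatt : IsWeaklyAttracting 𝓓 φ (fun τ => omegaLimit μ q φ K τ) := by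
    intro τ D hD N hN
    obtain ⟨V, hVopen, hVsub, hVN⟩ := mem_nhdsSet_iff_exists.mp hN
    have hVsub' : ⋂ r ∈ Ici (0:ℝ), C τ r ⊆ V := by
      rw [← hwkA τ]; exact hVsub
    have hrV : ∃ r, T τ ≤ r ∧ C τ r ⊆ V := by
      by_contra hcon
      push_neg at hcon
      have hne : (⋂ r : ℝ, C τ (max r (T τ)) ∩ Vᶜ).Nonempty := by
        apply IsCompact.nonempty_iInter_of_directed_nonempty_isCompact_isClosed
        · intro r s
          exact ⟨max r s,
            inter_subset_inter_left _ (hCanti τ (max_le_max (le_max_left r s) le_rfl)),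
            inter_subset_inter_left _ (hCanti τ (max_le_max (le_max_right r s) le_rfl))⟩
        · intro r
          obtain ⟨y, hy, hyV⟩ := not_subset.mp (hcon _ (le_max_right r (T τ)))
          exact ⟨y, hy, hyV⟩
        · exact fun r => (hCcpt τ _ (le_max_right _ _)).inter_right hVopen.isClosed_compl
        · exact fun r => isClosed_closure.inter hVopen.isClosed_compl
      obtain ⟨y, hy⟩ := hne
      have hy1 : y ∈ ⋂ r ∈ Ici (0:ℝ), C τ r := by
        rw [hIcc τ]
        exact mem_iInter.mpr fun r => (mem_iInter.mp hy r).1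
      exact (mem_iInter.mp hy 0).2 (hVsub' hy1)
    obtain ⟨r, hrT, hrV⟩ := hrV
    obtain ⟨T', hT'pos, hT'⟩ := key τ r hrT D hD
    refine ⟨T', hT'pos, fun t ht => ?_⟩
    rw [hwk]
    exact (image_mono (hT' t ht)).trans ((subset_closure.trans hrV).trans hVN)
  have hAmin : ∀ C' ∈ 𝓓, (∀ τ, WeaklyCompact μ q (C' τ)) → IsWeaklyAttracting 𝓓 φ C' →
      ∀ τ, omegaLimit μ q φ K τ ⊆ C' τ := by
    intro C' hC'𝓓 hC'cpt hC'att τ x hx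
    by_contra hxC
    have h1 : tw x ∉ wk μ q (C' τ) := by
      rw [hwk]
      rintro ⟨y, hy, he⟩
      exact hxC (htw_inj he ▸ hy)
    obtain ⟨Uo, Vo, hUo, hVo, hxU, hCV, hUV⟩ :=
      SeparatedNhds.of_isCompact_isCompact isCompact_singleton (hC'cpt τ)
        (disjoint_singleton_left.mpr h1)
    obtain ⟨T', hT'pos, hT'⟩ := hC'att τ K hK𝓓 Vo (hVo.mem_nhdsSet.mpr hCV)
    have hx1 : tw x ∈ C τ T' := by
      rw [hA_def τ] at hx
      exact mem_iInter₂.mp hx T' (mem_Ici.mpr hT'pos.le)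
    have h2 : tw '' U τ T' ⊆ Vo := by
      refine image_subset_iff.mpr (iUnion₂_subset fun t ht => image_subset_iff.mp ?_)
      rw [← hwk]
      exact hT' t ht
    have hVU : Vo ⊆ Uoᶜ := fun y hy hyU => Set.disjoint_left.mp hUV hyU hy
    have h3 : C τ T' ⊆ Uoᶜ := closure_minimal (h2.trans hVU) hUo.isClosed_compl
    exact (h3 hx1) (singleton_subset_iff.mp hxU)
  have hA : IsWeakMeanAttractor 𝓓 φ (fun τ => omegaLimit μ q φ K τ) :=
    ⟨hAmem, hAcpt, hAatt, hAmin⟩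
  refine ⟨⟨fun τ => omegaLimit μ q φ K τ, hA, fun B hB => funext fun τ => Subset.antisymm
    (hB.minimal _ hA.mem hA.compact hA.attracts τ)
    (hA.minimal B hB.mem hB.compact hB.attracts τ)⟩, hA⟩

end WeakMeanAttractor
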